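/- Let c = (c_0, c_1, …, c_{2p+1}) be a type C column sequence and let C_1, …, C_l be its chain decomposition. Then each block C_i has even length and is a chain, and every entry of C_i is strictly greater than every entry of C_{i+1} for 1 ≤ i < l. Conversely, this is the unique way of writing c as a concatenation of even-length chains in which every entry of each block strictly exceeds every entry of the following block. -/

import Mathlib

/-- A type C column sequence: weakly decreasing, even length, and each
consecutive pair `(c_{2i}, c_{2i+1})` has even sum. -/
def TypeC (c : List ℕ) : Prop :=
  Even c.length ∧ c.Chain' (· ≥ ·) ∧
    ∀ i, 2 * i + 1 < c.length → Even (c.getD (2 * i) 0 + c.getD (2 * i + 1) 0)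

/-- A chain `[b_0, b_1, …, b_{2k+1}]`: nonempty, of even length, weakly
decreasing, with `b_{2i-1} = b_{2i}` for `1 ≤ i ≤ k`. -/
def IsChainSeq (b : List ℕ) : Prop :=
  b ≠ [] ∧ Even b.length ∧ b.Chain' (· ≥ ·) ∧
    ∀ i, 2 * i + 2 < b.length → b.getD (2 * i + 1) 0 = b.getD (2 * i + 2) 0

/-- The chain decomposition of a column sequence: cut after each odd
position `2q+1` such that `c_{2q+1} > c_{2q+2}`. -/
def chains : List ℕ → List (List ℕ)
  | a :: b :: rest =>
    match chains rest with
    | [] => [[a, b]]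
    | C :: L => if C.headI < b then [a, b] :: C :: L else (a :: b :: C) :: L
  | _ => []

/-- A chain is generic if it is `[b_0 = b_1]` (length 2 with equal entries)
or has length `≥ 4` and `b_{2i} > b_{2i+1}` for all `i`. -/
def GenericChain (b : List ℕ) : Prop :=
  (b.length = 2 ∧ b.getD 0 0 = b.getD 1 0) ∨
  (4 ≤ b.length ∧ ∀ i, 2 * i + 1 < b.length → b.getD (2 * i + 1) 0 < b.getD (2 * i) 0)

/-- A column sequence is generic if all of its chains are generic. -/
def GenericSeq (c : List ℕ) : Prop := ∀ C ∈ chains c, GenericChain C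

/-- The fundamental degeneration of a quadruple `b_0 ≥ b_1 = b_2 ≥ b_3`. -/
def fundDeg (b0 b1 b2 b3 : ℕ) : ℕ × ℕ × ℕ × ℕ :=
  if b0 = b1 then
    if b2 = b3 then (b0 + 1, b1 + 1, b2 - 1, b3 - 1)
    else (b0 + 1, b1 + 1, b2 - 2, b3)
  else
    if b2 = b3 then (b0, b1 + 2, b2 - 1, b3 - 1)
    else (b0, b1 + 2, b2 - 2, b3)

/-- Replacement of the four consecutive entries at positions
`2i, 2i+1, 2i+2, 2i+3` by their fundamental degeneration, deleting the
last two entries if the two lowered entries both become `0`. -/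
def degenAt (c : List ℕ) (i : ℕ) : List ℕ :=
  let q := fundDeg (c.getD (2 * i) 0) (c.getD (2 * i + 1) 0)
    (c.getD (2 * i + 2) 0) (c.getD (2 * i + 3) 0)
  let c' := c.take (2 * i) ++ [q.1, q.2.1, q.2.2.1, q.2.2.2] ++ c.drop (2 * i + 4)
  if q.2.2.1 = 0 ∧ q.2.2.2 = 0 then c'.dropLast.dropLast else c'

/-- `Norm(O)`: the smallest collection containing `O` and closed under
fundamental degeneration at an interior pair of a chain (the positions
`(2i+1, 2i+2)` carry an interior pair of a chain exactly when the two
entries there are equal). -/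
inductive NormMem (O : List ℕ) : List ℕ → Prop
  | base : NormMem O O
  | step (c : List ℕ) (i : ℕ) : NormMem O c → 2 * i + 3 < c.length →
      c.getD (2 * i + 1) 0 = c.getD (2 * i + 2) 0 → NormMem O (degenAt c i)

/-- A decomposition of `c` into consecutive blocks, each of which is an
even-length chain, such that every entry of a block strictly exceeds
every entry of the following block. -/
def IsChainDecompOf (L : List (List ℕ)) (c : List ℕ) : Prop :=
  L.flatten = c ∧ (∀ C ∈ L, IsChainSeq C) ∧
    L.Chain' (fun C D => ∀ x ∈ C, ∀ y ∈ D, y < x)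

lemma chains_cons_cons (a b : ℕ) (rest : List ℕ) :
    chains (a :: b :: rest) = match chains rest with
      | [] => [[a, b]]
      | C :: L => if C.headI < b then [a, b] :: C :: L else (a :: b :: C) :: L := rfl

lemma chains_cons_cons' (a b : ℕ) (rest : List ℕ) {C : List ℕ} {L : List (List ℕ)}
    (h : chains rest = C :: L) :
    chains (a :: b :: rest) =
      if C.headI < b then [a, b] :: C :: L else (a :: b :: C) :: L := by
  rw [chains_cons_cons, h]

lemma mem_le_headI {l : List ℕ} (h : l.Chain' (· ≥ ·)) {y : ℕ} (hy : y ∈ l) :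
    y ≤ l.headI := by
  cases l with
  | nil => simp at hy
  | cons a l =>
    rcases List.mem_cons.mp hy with rfl | hy
    · simp
    · exact (List.pairwise_cons.mp (List.isChain_iff_pairwise.mp h)).1 y hy

lemma isChainSeq_pair {a b : ℕ} (h : b ≤ a) : IsChainSeq [a, b] :=
  ⟨by simp, by simp, List.isChain_pair.mpr h, fun i hi => by simp at hi⟩

lemma flatten_nil {L : List (List ℕ)} (h : ∀ C ∈ L, C ≠ []) (hf : L.flatten = []) :
    L = [] := by
  cases L with
  | nil => rfl
  | cons C L =>
    simp only [List.flatten_cons, List.append_eq_nil_iff] at hf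
    exact absurd hf.1 (h C (by simp))

lemma even_two_add {n : ℕ} (h : Even (n + 2)) : Even n := by
  rcases h with ⟨k, hk⟩; exact ⟨k - 1, by omega⟩

lemma even_flatten {L : List (List ℕ)} (h : ∀ C ∈ L, Even C.length) :
    Even L.flatten.length := by
  induction L with
  | nil => simp
  | cons C L ih =>
    simp only [List.flatten_cons, List.length_append]
    exact (h C (by simp)).add (ih fun D hD => h D (by simp [hD]))

theorem chains_isDecomp : ∀ c : List ℕ, Even c.length → c.Chain' (· ≥ ·) →
    IsChainDecompOf (chains c) c
  | [], _, _ => by simp [chains, IsChainDecompOf]; exact List.isChain_nil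
  | [a], he, _ => absurd (by simpa using he : Even 1) (by decide)
  | a :: b :: rest, he, hch => by
    have he' : Even rest.length := even_two_add (by simpa using he)
    obtain ⟨hab, hch'⟩ := List.isChain_cons_cons.mp hch
    obtain ⟨hflat, hblocks, hdrop⟩ := chains_isDecomp rest he' hch'.tail
    rcases hcr : chains rest with _ | ⟨C, L⟩
    · rw [hcr] at hflat; simp only [List.flatten_nil] at hflat
      subst hflat
      refine ⟨by simp [chains], ?_, ?_⟩
      · intro C hC
        simp only [chains, List.mem_singleton] at hC
        subst hC; exact isChainSeq_pair hab
      · exact List.isChain_singleton _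
    · rw [hcr] at hflat hblocks hdrop
      have hCchain : IsChainSeq C := hblocks C (by simp)
      have hCne : C ≠ [] := hCchain.1
      obtain ⟨c0, C', rfl⟩ : ∃ c0 C', C = c0 :: C' := by
        cases C with | nil => exact absurd rfl hCne | cons c0 C' => exact ⟨c0, C', rfl⟩
      have hrest : rest = c0 :: (C' ++ L.flatten) := by
        rw [← hflat]; simp
      have hbc0 : c0 ≤ b := by
        rw [hrest] at hch'
        exact (List.isChain_cons_cons.mp hch').1
      rw [chains_cons_cons' a b rest hcr]
      by_cases hcut : (c0 :: C').headI < b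
      · rw [if_pos hcut]
        refine ⟨by simpa using hflat, ?_, ?_⟩
        · intro D hD
          rcases List.mem_cons.mp hD with rfl | hD
          · exact isChainSeq_pair hab
          · exact hblocks D hD
        · refine List.isChain_cons_cons.mpr ⟨?_, hdrop⟩
          intro x hx y hy
          have hy' : y ≤ c0 := mem_le_headI hCchain.2.2.1 hy
          simp only [List.headI] at hcut
          rcases List.mem_cons.mp hx with rfl | hx
          · omega
          · simp only [List.mem_singleton] at hx; omega
      · rw [if_neg hcut]
        simp only [List.headI, not_lt] at hcut
        have hbc : b = c0 := le_antisymm hcut hbc0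
        refine ⟨by simpa using hflat, ?_, ?_⟩
        · intro D hD
          rcases List.mem_cons.mp hD with rfl | hD
          · refine ⟨by simp, ?_, ?_, ?_⟩
            · rcases hCchain.2.1 with ⟨k, hk⟩
              exact ⟨k + 1, by simp only [List.length_cons] at hk ⊢; omega⟩
            · exact List.isChain_cons_cons.mpr ⟨hab,
                List.isChain_cons_cons.mpr ⟨hbc0, hCchain.2.2.1⟩⟩
            · intro i hi
              cases i with
              | zero => simpa using hbc
              | succ j =>
                have hj : 2 * j + 2 < (c0 :: C').length := by
                  simp only [List.length_cons] at hi ⊢; omega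
                have := hCchain.2.2.2 j hj
                simpa [List.getD_cons_succ, show 2 * (j + 1) + 1 = (2 * j + 1) + 2 by ring,
                  show 2 * (j + 1) + 2 = (2 * j + 2) + 2 by ring] using this
          · exact hblocks D (List.mem_cons_of_mem _ hD)
        · rcases L with _ | ⟨D, L'⟩
          · exact List.isChain_singleton _
          · obtain ⟨hCD, hdrop'⟩ := List.isChain_cons_cons.mp hdrop
            refine List.isChain_cons_cons.mpr ⟨?_, hdrop'⟩
            intro x hx y hy
            have h0 : y < c0 := hCD c0 (by simp) y hy
            rcases List.mem_cons.mp hx with rfl | hx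
            · omega
            rcases List.mem_cons.mp hx with rfl | hx
            · omega
            · exact hCD x hx y hy

theorem chains_uniq : ∀ c L, IsChainDecompOf L c → L = chains c
  | [], L, ⟨hf, hb, _⟩ => by
    rw [show chains [] = [] from rfl]
    exact flatten_nil (fun C hC => (hb C hC).1) hf
  | [oddc], L, ⟨hf, hb, _⟩ => by
    exfalso
    have := even_flatten (fun C hC => (hb C hC).2.1)
    rw [hf] at this
    exact absurd (by simpa using this : Even 1) (by decide)
  | a :: b :: rest, L, ⟨hf, hb, hd⟩ => by
    obtain ⟨D, L', rfl⟩ : ∃ D L', L = D :: L' := by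
      cases L with
      | nil => simp at hf
      | cons D L' => exact ⟨D, L', rfl⟩
    have hD := hb D (by simp)
    obtain ⟨d0, d1, D'', rfl⟩ : ∃ d0 d1 D'', D = d0 :: d1 :: D'' := by
      rcases D with _ | ⟨d0, _ | ⟨d1, D''⟩⟩
      · exact absurd rfl hD.1
      · exact absurd (by simpa using hD.2.1 : Even 1) (by decide)
      · exact ⟨d0, d1, D'', rfl⟩
    simp only [List.flatten_cons, List.cons_append, List.cons.injEq] at hf
    obtain ⟨rfl, rfl, hrest⟩ := hf
    rcases D'' with _ | ⟨e, E'⟩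
    · -- D = [d0, d1]
      simp only [List.nil_append] at hrest
      rcases rest with _ | ⟨r0, rest'⟩
      · have : L' = [] :=
          flatten_nil (fun C hC => (hb C (List.mem_cons_of_mem _ hC)).1) hrest
        subst this; rfl
      · have hL' : IsChainDecompOf L' (r0 :: rest') :=
          ⟨hrest, fun C hC => hb C (List.mem_cons_of_mem _ hC),
            (List.isChain_cons.mp hd).2⟩
        have hind := chains_uniq (r0 :: rest') L' hL'
        obtain ⟨E, L'', rfl⟩ : ∃ E L'', L' = E :: L'' := by
          cases L' with
          | nil => simp at hrest
          | cons E L'' => exact ⟨E, L'', rfl⟩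
        have hEne : E ≠ [] := (hb E (by simp)).1
        obtain ⟨e0, E0, rfl⟩ : ∃ e0 E0, E = e0 :: E0 := by
          cases E with | nil => exact absurd rfl hEne | cons e0 E0 => exact ⟨e0, E0, rfl⟩
        have he0 : e0 = r0 := by
          simp only [List.flatten_cons, List.cons_append, List.cons.injEq] at hrest
          exact hrest.1
        have hlt : (e0 :: E0).headI < d1 :=
          (List.isChain_cons_cons.mp hd).1 d1 (by simp) e0 (by simp)
        rw [chains_cons_cons' _ _ _ hind.symm, if_pos hlt]
    · -- D = d0 :: d1 :: e :: E'
      have hlen4 : 2 < (d0 :: d1 :: e :: E').length := by simp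
      have hbe : d1 = e := by simpa using hD.2.2.2 0 (by simpa using hlen4)
      have h' : IsChainDecompOf ((e :: E') :: L') rest := by
        refine ⟨by simpa using hrest, ?_, ?_⟩
        · intro C hC
          rcases List.mem_cons.mp hC with rfl | hC
          · refine ⟨by simp, ?_, List.IsChain.tail (List.IsChain.tail hD.2.2.1), ?_⟩
            · have := hD.2.1
              simp only [List.length_cons] at this ⊢
              exact even_two_add this
            · intro j hj
              have hj' : 2 * (j + 1) + 2 < (d0 :: d1 :: e :: E').length := by
                simp only [List.length_cons] at hj ⊢; omega
              have := hD.2.2.2 (j + 1) hj'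
              simpa [List.getD_cons_succ, show 2 * (j + 1) + 1 = (2 * j + 1) + 2 by ring,
                show 2 * (j + 1) + 2 = (2 * j + 2) + 2 by ring] using this
          · exact hb C (List.mem_cons_of_mem _ hC)
        · obtain ⟨hhead, hL'⟩ := List.isChain_cons.mp hd
          refine List.isChain_cons.mpr ⟨?_, hL'⟩
          intro F hF x hx y hy
          exact hhead F hF x (List.mem_cons_of_mem _ (List.mem_cons_of_mem _ hx)) y hy
      have hind := chains_uniq rest ((e :: E') :: L') h'
      rw [chains_cons_cons' _ _ _ hind.symm, if_neg (by simp [hbe])]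

/-- the chain decomposition of a type C column sequence is a
decomposition into even-length chains with strict drops between blocks,
and it is the unique such decomposition. -/
theorem chain_decomposition_exists_unique (c : List ℕ) (hc : TypeC c) :
    IsChainDecompOf (chains c) c ∧ ∀ L, IsChainDecompOf L c → L = chains c :=
  ⟨chains_isDecomp c hc.1 hc.2.1, fun L hL => chains_uniq c L hL⟩
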